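/- Let A : ℓ¹(ℕ) → Y be bounded linear, Y a Banach space, and suppose for every n the restricted injectivity property ‖Ax‖ ≥ γ_n⁻¹‖x‖₁ holds for all x with |supp x| ≤ n. Then for every ξ ∈ ℓ^∞(ℕ) with |supp ξ| ≤ n and entries in {-1,0,1}, there exists η ∈ Y* with ‖η‖_{Y*} ≤ γ_n and P_{supp ξ} A* η = ξ. -/

import Mathlib

noncomputable section

abbrev L1 : Type := lp (fun _ : ℕ => ℝ) 1

def e (k : ℕ) : L1 := lp.single 1 k 1

def SuppLe (x : L1) (n : ℕ) : Prop :=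
  ∃ s : Finset ℕ, s.card ≤ n ∧ ∀ k ∉ s, (x : ℕ → ℝ) k = 0

def SignSeqLe (ξ : ℕ → ℝ) (n : ℕ) : Prop :=
  (∀ k, ξ k = -1 ∨ ξ k = 0 ∨ ξ k = 1) ∧
    ∃ s : Finset ℕ, s.card ≤ n ∧ ∀ k ∉ s, ξ k = 0

lemma smul_e_eq_single (i : ℕ) (a : ℝ) : a • e i = lp.single 1 i a := by
  rw [e, ← lp.single_smul, smul_eq_mul, mul_one]

lemma norm_sum_smul_e (s : Finset ℕ) (c : ℕ → ℝ) :
    ‖∑ i ∈ s, c i • e i‖ = ∑ i ∈ s, |c i| := by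
  have hp : 0 < (1 : ENNReal).toReal := by norm_num
  have := lp.norm_sum_single (E := fun _ : ℕ => ℝ) (p := 1) hp c s
  simp only [ENNReal.toReal_one, Real.rpow_one] at this
  simpa [smul_e_eq_single, Real.norm_eq_abs] using this

/-- The restricted injectivity property implies items (i) and (ii) of the source
condition: for every sign sequence `ξ` with at most `n` nonzero entries there is
`η ∈ Y*` with `‖η‖ ≤ γₙ` and `P_{supp ξ} A*η = ξ`, where `[A*η]_k = η (A e⁽ᵏ⁾)`. -/
theorem stmt9 {Y : Type*} [NormedAddCommGroup Y] [NormedSpace ℝ Y] [CompleteSpace Y]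
    (A : L1 →L[ℝ] Y) (γ : ℕ → ℝ) (hγpos : ∀ n, 0 < γ n)
    (hRIP : ∀ n, ∀ x : L1, SuppLe x n → ‖A x‖ ≥ (γ n)⁻¹ * ‖x‖) :
    ∀ n, ∀ ξ : ℕ → ℝ, SignSeqLe ξ n →
      ∃ η : StrongDual ℝ Y, ‖η‖ ≤ γ n ∧ ∀ k, ξ k ≠ 0 → η (A (e k)) = ξ k := by
  classical
  intro n ξ hξ
  obtain ⟨hsign, s, hcard, hs0⟩ := hξ
  -- extension of a function on s to ℕ
  set ext : (↥s → ℝ) → (ℕ → ℝ) :=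
    fun c j => if h : j ∈ s then c ⟨j, h⟩ else 0 with hext
  -- the linear map (s → ℝ) → L1
  let S : (↥s → ℝ) →ₗ[ℝ] L1 :=
    { toFun := fun c => ∑ i ∈ s, ext c i • e i
      map_add' := by
        intro a b
        rw [← Finset.sum_add_distrib]
        refine Finset.sum_congr rfl fun i hi => ?_
        simp [hext, dif_pos hi, add_smul]
      map_smul' := by
        intro m a
        rw [Finset.smul_sum]
        refine Finset.sum_congr rfl fun i hi => ?_
        simp [hext, dif_pos hi, smul_smul] }
  have hSnorm : ∀ c : ↥s → ℝ, ‖S c‖ = ∑ i ∈ s.attach, |c i| := by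
    intro c
    rw [show (S c : L1) = ∑ i ∈ s, ext c i • e i from rfl, norm_sum_smul_e]
    rw [← Finset.sum_attach s (fun i => |ext c i|)]
    refine Finset.sum_congr rfl fun i _ => ?_
    simp [hext, dif_pos i.2]
  have hSsupp : ∀ c : ↥s → ℝ, SuppLe (S c) n := by
    intro c
    refine ⟨s, hcard, fun k hk => ?_⟩
    have : (S c : L1) = ∑ i ∈ s, ext c i • e i := rfl
    rw [this, lp.coeFn_sum, Finset.sum_apply]
    refine Finset.sum_eq_zero fun i hi => ?_
    rw [lp.coeFn_smul, Pi.smul_apply]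
    have : (e i : ℕ → ℝ) k = 0 := by
      apply lp.single_apply_ne
      exact fun h => hk (h ▸ hi)
    simp [this]
  -- T = A ∘ S
  let T : (↥s → ℝ) →ₗ[ℝ] Y := (A : L1 →ₗ[ℝ] Y).comp S
  have hTle : ∀ c : ↥s → ℝ, ‖S c‖ ≤ γ n * ‖T c‖ := by
    intro c
    have h1 := hRIP n (S c) (hSsupp c)
    have h2 : (γ n)⁻¹ * ‖S c‖ ≤ ‖A (S c)‖ := h1
    calc ‖S c‖ = γ n * ((γ n)⁻¹ * ‖S c‖) := by
          rw [← mul_assoc, mul_inv_cancel₀ (hγpos n).ne', one_mul]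
      _ ≤ γ n * ‖A (S c)‖ := by
          exact mul_le_mul_of_nonneg_left h2 (hγpos n).le
      _ = γ n * ‖T c‖ := rfl
  have hTinj : Function.Injective T := by
    intro a b hab
    have h0 : T (a - b) = 0 := by rw [map_sub, hab, sub_self]
    have : ‖S (a - b)‖ ≤ 0 := by
      have := hTle (a - b)
      rwa [h0, norm_zero, mul_zero] at this
    have hS0 : ∑ i ∈ s.attach, |(a - b) i| = 0 := by
      have := hSnorm (a - b)
      have hge : (0:ℝ) ≤ ‖S (a-b)‖ := norm_nonneg _
      have : ‖S (a-b)‖ = 0 := le_antisymm ‹‖S (a - b)‖ ≤ 0› hge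
      rw [← hSnorm (a-b)]; exact this
    have : ∀ i ∈ s.attach, |(a - b) i| = 0 :=
      (Finset.sum_eq_zero_iff_of_nonneg fun i _ => abs_nonneg _).1 hS0
    funext i
    have := this i (Finset.mem_attach _ _)
    have : (a - b) i = 0 := abs_eq_zero.1 this
    simpa [sub_eq_zero] using this
  -- the functional c ↦ ∑ ξ i * c i
  let ℓf : (↥s → ℝ) →ₗ[ℝ] ℝ :=
    { toFun := fun c => ∑ i ∈ s.attach, ξ i * c i
      map_add' := by
        intro a b
        rw [← Finset.sum_add_distrib]
        exact Finset.sum_congr rfl fun i _ => by simp [Pi.add_apply, mul_add]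
      map_smul' := by
        intro m a
        simp only [Pi.smul_apply, smul_eq_mul, RingHom.id_apply, Finset.mul_sum]
        exact Finset.sum_congr rfl fun i _ => by ring }
  have hℓbound : ∀ c : ↥s → ℝ, |ℓf c| ≤ γ n * ‖T c‖ := by
    intro c
    have h1 : |ℓf c| ≤ ∑ i ∈ s.attach, |c i| := by
      refine (Finset.abs_sum_le_sum_abs _ _).trans ?_
      refine Finset.sum_le_sum fun i _ => ?_
      rw [abs_mul]
      have hξ1 : |ξ i| ≤ 1 := by
        rcases hsign i with h | h | h <;> simp [h]
      calc |ξ i| * |c i| ≤ 1 * |c i| :=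
            mul_le_mul_of_nonneg_right hξ1 (abs_nonneg _)
        _ = |c i| := one_mul _
    exact h1.trans ((hSnorm c) ▸ hTle c)
  -- range of T and the equiv
  let Eq := LinearEquiv.ofInjective T hTinj
  let W : Submodule ℝ Y := LinearMap.range T
  let ψ : ↥W →ₗ[ℝ] ℝ := ℓf.comp Eq.symm.toLinearMap
  have hψbound : ∀ w : ↥W, ‖ψ w‖ ≤ γ n * ‖w‖ := by
    intro w
    set c := Eq.symm w with hc
    have hw : (w : Y) = T c := by
      have : Eq c = w := by rw [hc, LinearEquiv.apply_symm_apply]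
      have h2 : ((Eq c : ↥W) : Y) = T c := rfl
      rw [← this] at *
      exact h2
    have : ψ w = ℓf c := rfl
    rw [this, Real.norm_eq_abs]
    have := hℓbound c
    rwa [show ‖(w : ↥W)‖ = ‖T c‖ by rw [← hw]; rfl]
  let f : ↥W →L[ℝ] ℝ := ψ.mkContinuous (γ n) hψbound
  have hfnorm : ‖f‖ ≤ γ n := ψ.mkContinuous_norm_le (hγpos n).le hψbound
  obtain ⟨η, hext', hnorm⟩ := exists_extension_norm_eq W f
  refine ⟨η, by rw [hnorm]; exact hfnorm, ?_⟩
  intro k hk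
  have hks : k ∈ s := by
    by_contra hks
    exact hk (hs0 k hks)
  -- the indicator function
  set δ : ↥s → ℝ := Pi.single ⟨k, hks⟩ 1 with hδ
  have hSδ : S δ = e k := by
    show (∑ i ∈ s, ext δ i • e i) = e k
    rw [← Finset.sum_attach s (fun i => ext δ i • e i)]
    rw [Finset.sum_eq_single (⟨k, hks⟩ : ↥s)]
    · simp only [hext]
      rw [dif_pos hks]
      simp [hδ, Pi.single_eq_same]
    · intro i _ h
      have h1 : ext δ (i : ℕ) = 0 := by
        simp only [hext]
        rw [dif_pos i.2]
        simpa [hδ] using Pi.single_eq_of_ne (by simpa using h) 1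
      rw [h1, zero_smul]
    · intro h
      exact absurd (Finset.mem_attach _ _) h
  have hTδ : T δ = A (e k) := by
    show A (S δ) = A (e k)
    rw [hSδ]
  have hmem : A (e k) ∈ W := ⟨δ, hTδ⟩
  have hηf : η (A (e k)) = f ⟨A (e k), hmem⟩ := hext' ⟨A (e k), hmem⟩
  have hfψ : f ⟨A (e k), hmem⟩ = ψ ⟨A (e k), hmem⟩ := rfl
  have hEq : Eq δ = (⟨A (e k), hmem⟩ : ↥W) := by
    apply Subtype.ext
    show T δ = A (e k)
    exact hTδ
  have hψval : ψ (⟨A (e k), hmem⟩ : ↥W) = ℓf δ := by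
    show ℓf (Eq.symm ⟨A (e k), hmem⟩) = ℓf δ
    rw [← hEq, LinearEquiv.symm_apply_apply]
  have hℓδ : ℓf δ = ξ k := by
    show ∑ i ∈ s.attach, ξ i * δ i = ξ k
    rw [Finset.sum_eq_single (⟨k, hks⟩ : ↥s)]
    · simp [hδ, Pi.single_eq_same]
    · intro i _ h
      simp [hδ, Pi.single_eq_of_ne h]
    · intro h
      exact absurd (Finset.mem_attach _ _) h
  rw [hηf, hfψ, hψval, hℓδ]
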